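/- Let f, g, h, k be complex numbers and R : ℕ → ℂ satisfy R 0 = h, R 1 = k, R (n+2) = f * R (n+1) + g * R n. Define S n = ∑_{i=1}^{n} (k^2 - g*h^2 - f*h*k) * (-g)^(i-1). Then for all n ≥ 1: f * (f^2 - g^2 + 2*g - 1) * ∑_{i=1}^{n} R i * R (i-1) = (1 - g) * ((R (n+1))^2 - k^2) + g * (g - 1 + f^2) * ((R n)^2 - h^2) + (1 - f^2 - g^2) * S n. -/

import Mathlib

theorem stmt_17 (f g h k : ℂ) (R : ℕ → ℂ)
    (h0 : R 0 = h) (h1 : R 1 = k)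
    (hrec : ∀ n, R (n + 2) = f * R (n + 1) + g * R n) :
    ∀ n : ℕ, 1 ≤ n →
      f * (f^2 - g^2 + 2*g - 1) * ∑ i ∈ Finset.Icc 1 n, R i * R (i - 1)
        = (1 - g) * ((R (n+1))^2 - k^2) + g * (g - 1 + f^2) * ((R n)^2 - h^2)
          + (1 - f^2 - g^2) * ∑ i ∈ Finset.Icc 1 n, (k^2 - g*h^2 - f*h*k) * (-g)^(i-1) := by
  intro n hn
  induction n, hn using Nat.le_induction with
  | base =>
    simp only [Finset.Icc_self, Finset.sum_singleton]
    have h2 := hrec 0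
    rw [h0, h1] at h2
    simp [h0, h1, h2]
    ring
  | succ n hn ih =>
    rw [Finset.sum_Icc_succ_top (by omega : 1 ≤ n + 1),
        Finset.sum_Icc_succ_top (by omega : 1 ≤ n + 1)]
    have h2 := hrec n
    simp only [Nat.add_sub_cancel]
    rw [show n + 1 + 1 = n + 2 from rfl, h2]
    have hE : ∀ m : ℕ, R (m+1)^2 - f * R (m+1) * R m - g * (R m)^2
        = (-g)^m * (k^2 - f*h*k - g*h^2) := by
      intro m
      induction m with
      | zero => simp [h0, h1]; ring
      | succ m ihm =>
        rw [hrec m, pow_succ]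
        linear_combination (-g) * ihm
    linear_combination ih + (1 - f^2 - g^2) * hE n
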